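/- Each robot's final accumulated delay equals the sum of its per-collaboration waiting times: for every robot i, d_K(i) = Σ_{k < K, i ∈ S_k} (T_k − (t_k(i) + d_k(i))), and each summand T_k − (t_k(i) + d_k(i)) is nonnegative. -/
import Mathlib


/-- Each robot's final accumulated delay equals the sum of its
per-collaboration waiting times, and each waiting time is nonnegative. -/
theorem final_delay_eq_sum_of_waits (n K : ℕ) (hn : 1 ≤ n)
    (S : Fin K → Finset (Fin n)) (hS : ∀ k, (S k).Nonempty)
    (t : Fin K → Fin n → ℝ) (d : ℕ → Fin n → ℝ)
    (hd0 : ∀ i, d 0 i = 0)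
    (hd : ∀ k : Fin K, ∀ i : Fin n,
      d (k + 1) i =
        if i ∈ S k then
          (S k).sup' (hS k) (fun j => t k j + d k j) - t k i
        else d k i) :
    (∀ i : Fin n,
      d K i =
        ∑ k ∈ Finset.univ.filter (fun k : Fin K => i ∈ S k),
          ((S k).sup' (hS k) (fun j => t k j + d k j) - (t k i + d k i))) ∧
    (∀ k : Fin K, ∀ i ∈ S k,
      0 ≤ (S k).sup' (hS k) (fun j => t k j + d k j) - (t k i + d k i)) := by
  have key : ∀ k : Fin K, ∀ i ∈ S k,
      t k i + d k i ≤ (S k).sup' (hS k) (fun j => t k j + d k j) :=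
    fun k i hi => Finset.le_sup' (fun j => t k j + d k j) hi
  refine ⟨?_, fun k i hi => sub_nonneg.mpr (key k i hi)⟩
  intro i
  set F : Fin K → ℝ := fun k =>
    if i ∈ S k then (S k).sup' (hS k) (fun j => t k j + d k j) - (t k i + d k i) else 0
    with hF
  have main : ∀ m, m ≤ K →
      d m i = ∑ k ∈ Finset.univ.filter (fun k : Fin K => (k : ℕ) < m), F k := by
    intro m
    induction m with
    | zero => intro _; simp [hd0]
    | succ m ih =>
      intro hm
      have hmK : m < K := hm
      have hstep : d (m + 1) i = d m i + F ⟨m, hmK⟩ := by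
        have h2 := hd ⟨m, hmK⟩ i
        simp only [hF]
        by_cases h : i ∈ S ⟨m, hmK⟩ <;> simp [h] at h2 ⊢ <;> rw [h2] <;> ring
      have hset : Finset.univ.filter (fun k : Fin K => (k : ℕ) < m + 1)
          = insert ⟨m, hmK⟩ (Finset.univ.filter (fun k : Fin K => (k : ℕ) < m)) := by
        ext k
        simp only [Finset.mem_insert, Finset.mem_filter, Finset.mem_univ, true_and]
        constructor
        · intro hk
          rcases Nat.lt_succ_iff_lt_or_eq.mp hk with h | h
          · exact Or.inr h
          · exact Or.inl (Fin.ext h)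
        · rintro (rfl | h)
          · exact Nat.lt_succ_self m
          · exact Nat.lt_succ_of_lt h
      rw [hstep, ih (le_of_lt hm), hset, Finset.sum_insert (by simp)]
      ring
  have hK := main K le_rfl
  have h1 : Finset.univ.filter (fun k : Fin K => (k : ℕ) < K) = Finset.univ := by
    simp [Finset.filter_true_of_mem, Fin.is_lt]
  rw [hK, h1, Finset.sum_filter]
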